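/- Let a, b, c, d > 0 and define G_B : ℝ² → ℝ² by G_B(u) = |u|^{-1} ((a u₁² + b u₂²) u₁, (c u₁² + d u₂²) u₂) for u ≠ 0 and G_B(0) = 0. If for every unit vector w = (w₁,w₂) ∈ ℝ² one has (b + c - (a w₁² + b w₂² + c w₁² + d w₂²)/2)² ≤ 4ad, then G_B is monotone, i.e., (G_B(u) - G_B(v))·(u - v) ≥ 0 for all u, v ∈ ℝ². -/

import Mathlib

open Classical

/-- `G_B(u) = |u|⁻¹ ((a u₁² + b u₂²) u₁, (c u₁² + d u₂²) u₂)`, with `G_B(0) = 0`. -/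
noncomputable def GB2 (a b c d : ℝ) (u : EuclideanSpace ℝ (Fin 2)) :
    EuclideanSpace ℝ (Fin 2) :=
  if u = 0 then 0 else
    ‖u‖⁻¹ • (WithLp.toLp 2 ![(a * (u 0) ^ 2 + b * (u 1) ^ 2) * u 0,
               (c * (u 0) ^ 2 + d * (u 1) ^ 2) * u 1] : EuclideanSpace ℝ (Fin 2))

lemma quadform_nonneg {A B C p q : ℝ} (hA : 0 ≤ A) (hC : 0 ≤ C) (hB : B^2 ≤ A*C) :
    0 ≤ A*p^2 + 2*B*p*q + C*q^2 := by
  rcases eq_or_lt_of_le hA with hA0 | hA0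
  · have hB0 : B = 0 := by nlinarith [sq_nonneg B]
    rw [← hA0, hB0]
    have := mul_nonneg hC (sq_nonneg q)
    nlinarith
  · nlinarith [sq_nonneg (A*p + B*q), mul_nonneg (sub_nonneg.2 hB) (sq_nonneg q)]

lemma key_poly (a b c d x y p q : ℝ) (ha : 0 < a) (hb : 0 < b) (hc : 0 < c) (hd : 0 < d)
    (hH : ((b+c)*(x^2+y^2) - ((a+c)*x^2+(b+d)*y^2)/2)^2 ≤ 4*a*d*(x^2+y^2)^2) :
    0 ≤ 2*(((2*a*x*p+2*b*y*q)*x+(a*x^2+b*y^2)*p)*p + ((2*c*x*p+2*d*y*q)*y+(c*x^2+d*y^2)*q)*q)*(x^2+y^2)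
      - ((a*x^2+b*y^2)*x*p+(c*x^2+d*y^2)*y*q)*(2*(x*p+y*q)) := by
  have hA : (0:ℝ) ≤ a*x^2*(2*x^2+3*y^2)+b*y^4 := by positivity
  have hC : (0:ℝ) ≤ c*x^4+d*y^2*(3*x^2+2*y^2) := by positivity
  have hB : (x*y*((b+c)*(x^2+y^2)-((a+c)*x^2+(b+d)*y^2)/2))^2
      ≤ (a*x^2*(2*x^2+3*y^2)+b*y^4)*(c*x^4+d*y^2*(3*x^2+2*y^2)) := by
    have h1 := mul_le_mul_of_nonneg_right hH (by positivity : (0:ℝ) ≤ x^2*y^2)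
    nlinarith [mul_nonneg (show (0:ℝ) ≤ a*x^2*y^2+b*y^4 by positivity) hC,
      mul_nonneg (show (0:ℝ) ≤ 2*a*x^2*(x^2+y^2) by positivity)
        (show (0:ℝ) ≤ d*x^2*y^2+c*x^4 by positivity)]
  have hq := quadform_nonneg (p := p) (q := q) hA hC hB
  nlinarith [hq]

/-- auxiliary scalar function: `t ↦ ⟨G_B(v + t e), e⟩` in coordinates. -/
noncomputable def gaux (a b c d v0 v1 p q t : ℝ) : ℝ :=
  if (v0+t*p)^2+(v1+t*q)^2 = 0 then 0 else
    (Real.sqrt ((v0+t*p)^2+(v1+t*q)^2))⁻¹ *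
      ((a*(v0+t*p)^2+b*(v1+t*q)^2)*(v0+t*p)*p + (c*(v0+t*p)^2+d*(v1+t*q)^2)*(v1+t*q)*q)

lemma gaux_le (a b c d : ℝ) (ha : 0 < a) (hb : 0 < b) (hc : 0 < c) (hd : 0 < d)
    (hH : ∀ x y : ℝ, ((b+c)*(x^2+y^2) - ((a+c)*x^2+(b+d)*y^2)/2)^2 ≤ 4*a*d*(x^2+y^2)^2)
    (v0 v1 p q : ℝ) :
    gaux a b c d v0 v1 p q 0 ≤ gaux a b c d v0 v1 p q 1 := by
  by_cases hz : ∃ t ∈ Set.Icc (0:ℝ) 1, (v0+t*p)^2+(v1+t*q)^2 = 0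
  · obtain ⟨t₀, ht₀, h0⟩ := hz
    have h1 : v0 + t₀*p = 0 := by nlinarith [sq_nonneg (v0+t₀*p), sq_nonneg (v1+t₀*q)]
    have h2 : v1 + t₀*q = 0 := by nlinarith [sq_nonneg (v0+t₀*p), sq_nonneg (v1+t₀*q)]
    have hK : (0:ℝ) ≤ (a*p^2+b*q^2)*p^2+(c*p^2+d*q^2)*q^2 := by positivity
    have hg1 : 0 ≤ gaux a b c d v0 v1 p q 1 := by
      unfold gaux
      split_ifs with h1c
      · exact le_refl _
      · apply mul_nonneg (inv_nonneg.2 (Real.sqrt_nonneg _))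
        have e0 : v0 + 1*p = (1-t₀)*p := by linear_combination h1
        have e1 : v1 + 1*q = (1-t₀)*q := by linear_combination h2
        rw [e0, e1]
        have hexp : (a*((1-t₀)*p)^2+b*((1-t₀)*q)^2)*((1-t₀)*p)*p
            + (c*((1-t₀)*p)^2+d*((1-t₀)*q)^2)*((1-t₀)*q)*q
            = (1-t₀)^3 * ((a*p^2+b*q^2)*p^2+(c*p^2+d*q^2)*q^2) := by ring
        rw [hexp]
        have ht : (0:ℝ) ≤ 1 - t₀ := by linarith [ht₀.2]
        exact mul_nonneg (pow_nonneg ht 3) hK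
    have hg0 : gaux a b c d v0 v1 p q 0 ≤ 0 := by
      unfold gaux
      split_ifs with h0c
      · exact le_refl _
      · have e0 : v0 + 0*p = -(t₀*p) := by linear_combination h1
        have e1 : v1 + 0*q = -(t₀*q) := by linear_combination h2
        rw [e0, e1]
        have hexp : (a*(-(t₀*p))^2+b*(-(t₀*q))^2)*(-(t₀*p))*p
            + (c*(-(t₀*p))^2+d*(-(t₀*q))^2)*(-(t₀*q))*q
            = -(t₀^3 * ((a*p^2+b*q^2)*p^2+(c*p^2+d*q^2)*q^2)) := by ring
        rw [hexp, mul_neg]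
        exact neg_nonpos.2 (mul_nonneg (inv_nonneg.2 (Real.sqrt_nonneg _))
          (mul_nonneg (pow_nonneg ht₀.1 3) hK))
    linarith
  · push_neg at hz
    set X : ℝ → ℝ := fun t => v0 + t*p with hXdef
    set Y : ℝ → ℝ := fun t => v1 + t*q with hYdef
    have hNpos : ∀ t ∈ Set.Icc (0:ℝ) 1, 0 < (X t)^2 + (Y t)^2 := by
      intro t ht
      exact lt_of_le_of_ne (by positivity) (Ne.symm (hz t ht))
    set F : ℝ → ℝ := fun t =>
      (Real.sqrt ((X t)^2+(Y t)^2))⁻¹ *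
        ((a*(X t)^2+b*(Y t)^2)*(X t)*p + (c*(X t)^2+d*(Y t)^2)*(Y t)*q) with hFdef
    have hXd : ∀ t : ℝ, HasDerivAt X p t := by
      intro t
      simpa [hXdef] using ((hasDerivAt_id t).mul_const p).const_add v0
    have hYd : ∀ t : ℝ, HasDerivAt Y q t := by
      intro t
      simpa [hYdef] using ((hasDerivAt_id t).mul_const q).const_add v1
    have hNd : ∀ t : ℝ, HasDerivAt (fun t => (X t)^2 + (Y t)^2) (2*(X t)*p + 2*(Y t)*q) t := by
      intro t
      have := ((hXd t).pow 2).add ((hYd t).pow 2)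
      exact this.congr_deriv (by ring)
    have hPd : ∀ t : ℝ, HasDerivAt (fun t => (a*(X t)^2+b*(Y t)^2)*(X t)*p + (c*(X t)^2+d*(Y t)^2)*(Y t)*q)
        (((2*a*(X t)*p+2*b*(Y t)*q)*(X t)+(a*(X t)^2+b*(Y t)^2)*p)*p
          + ((2*c*(X t)*p+2*d*(Y t)*q)*(Y t)+(c*(X t)^2+d*(Y t)^2)*q)*q) t := by
      intro t
      have h1 : HasDerivAt (fun t => a*(X t)^2+b*(Y t)^2) (2*a*(X t)*p+2*b*(Y t)*q) t := by
        have := (((hXd t).pow 2).const_mul a).add (((hYd t).pow 2).const_mul b)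
        exact this.congr_deriv (by ring)
      have h2 : HasDerivAt (fun t => c*(X t)^2+d*(Y t)^2) (2*c*(X t)*p+2*d*(Y t)*q) t := by
        have := (((hXd t).pow 2).const_mul c).add (((hYd t).pow 2).const_mul d)
        exact this.congr_deriv (by ring)
      exact ((h1.mul (hXd t)).mul_const p).add ((h2.mul (hYd t)).mul_const q)
    have hFd : ∀ t : ℝ, 0 < (X t)^2 + (Y t)^2 →
        HasDerivAt F
          ((2*(((2*a*(X t)*p+2*b*(Y t)*q)*(X t)+(a*(X t)^2+b*(Y t)^2)*p)*p
              + ((2*c*(X t)*p+2*d*(Y t)*q)*(Y t)+(c*(X t)^2+d*(Y t)^2)*q)*q)*((X t)^2+(Y t)^2)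
            - ((a*(X t)^2+b*(Y t)^2)*(X t)*p+(c*(X t)^2+d*(Y t)^2)*(Y t)*q)*(2*((X t)*p+(Y t)*q)))
            / (2*((X t)^2+(Y t)^2)*Real.sqrt ((X t)^2+(Y t)^2))) t := by
      intro t hNt
      have hs : 0 < Real.sqrt ((X t)^2+(Y t)^2) := Real.sqrt_pos.2 hNt
      have hsq := (hNd t).sqrt (ne_of_gt hNt)
      have hinv := hsq.inv (ne_of_gt hs)
      have hmul := hinv.mul (hPd t)
      refine hmul.congr_deriv ?_
      simp only [Pi.inv_apply]
      have h2 : Real.sqrt ((X t)^2+(Y t)^2)^2 = (X t)^2+(Y t)^2 := Real.sq_sqrt hNt.le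
      rw [← h2]
      field_simp
      rw [Real.sq_sqrt (sq_nonneg _), h2]
      ring
    have hFcont : ContinuousOn F (Set.Icc 0 1) := by
      intro t ht
      have hNt := hNpos t ht
      have hNc : Continuous (fun t => (X t)^2 + (Y t)^2) := by fun_prop
      have hPc : Continuous (fun t => (a*(X t)^2+b*(Y t)^2)*(X t)*p + (c*(X t)^2+d*(Y t)^2)*(Y t)*q) := by
        fun_prop
      have hsc : ContinuousAt (fun t => Real.sqrt ((X t)^2+(Y t)^2)) t :=
        (Real.continuous_sqrt.comp hNc).continuousAt
      exact (((hsc.inv₀ (ne_of_gt (Real.sqrt_pos.2 hNt))).mul hPc.continuousAt)).continuousWithinAt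
    have hmono : MonotoneOn F (Set.Icc 0 1) := by
      apply monotoneOn_of_hasDerivWithinAt_nonneg (convex_Icc 0 1) hFcont
        (f' := fun t =>
          (2*(((2*a*(X t)*p+2*b*(Y t)*q)*(X t)+(a*(X t)^2+b*(Y t)^2)*p)*p
              + ((2*c*(X t)*p+2*d*(Y t)*q)*(Y t)+(c*(X t)^2+d*(Y t)^2)*q)*q)*((X t)^2+(Y t)^2)
            - ((a*(X t)^2+b*(Y t)^2)*(X t)*p+(c*(X t)^2+d*(Y t)^2)*(Y t)*q)*(2*((X t)*p+(Y t)*q)))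
            / (2*((X t)^2+(Y t)^2)*Real.sqrt ((X t)^2+(Y t)^2)))
      · intro t ht
        rw [interior_Icc] at ht
        have hNt := hNpos t ⟨ht.1.le, ht.2.le⟩
        exact (hFd t hNt).hasDerivWithinAt
      · intro t ht
        rw [interior_Icc] at ht
        have hNt := hNpos t ⟨ht.1.le, ht.2.le⟩
        apply div_nonneg
        · exact key_poly a b c d (X t) (Y t) p q ha hb hc hd (hH (X t) (Y t))
        · positivity
    have hg0 : gaux a b c d v0 v1 p q 0 = F 0 := by
      rw [gaux, if_neg (hz 0 ⟨le_refl 0, zero_le_one⟩)]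
    have hg1 : gaux a b c d v0 v1 p q 1 = F 1 := by
      rw [gaux, if_neg (hz 1 ⟨zero_le_one, le_refl 1⟩)]
    rw [hg0, hg1]
    exact hmono ⟨le_refl 0, zero_le_one⟩ ⟨zero_le_one, le_refl 1⟩ zero_le_one

lemma inner_GB2 (a b c d : ℝ) (u e : EuclideanSpace ℝ (Fin 2)) :
    @inner ℝ _ _ (GB2 a b c d u) e =
      if (u 0)^2 + (u 1)^2 = 0 then 0 else
        (Real.sqrt ((u 0)^2 + (u 1)^2))⁻¹ *
          ((a*(u 0)^2 + b*(u 1)^2)*(u 0)*(e 0) + (c*(u 0)^2 + d*(u 1)^2)*(u 1)*(e 1)) := by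
  by_cases hu : u = 0
  · subst hu
    simp [GB2]
  · have hne : (u 0)^2 + (u 1)^2 ≠ 0 := by
      intro h0
      apply hu
      have h1 : u 0 = 0 := by nlinarith [sq_nonneg (u 0), sq_nonneg (u 1)]
      have h2 : u 1 = 0 := by nlinarith [sq_nonneg (u 0), sq_nonneg (u 1)]
      ext i
      fin_cases i <;> simpa
    have hnorm : ‖u‖ = Real.sqrt ((u 0)^2 + (u 1)^2) := by
      rw [EuclideanSpace.norm_eq]
      simp [Fin.sum_univ_two, sq_abs]
    have c0 : (‖u‖⁻¹ • (WithLp.toLp 2 ![(a * (u 0) ^ 2 + b * (u 1) ^ 2) * u 0,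
               (c * (u 0) ^ 2 + d * (u 1) ^ 2) * u 1] : EuclideanSpace ℝ (Fin 2))) 0
        = ‖u‖⁻¹ * ((a * (u 0) ^ 2 + b * (u 1) ^ 2) * u 0) := rfl
    have c1 : (‖u‖⁻¹ • (WithLp.toLp 2 ![(a * (u 0) ^ 2 + b * (u 1) ^ 2) * u 0,
               (c * (u 0) ^ 2 + d * (u 1) ^ 2) * u 1] : EuclideanSpace ℝ (Fin 2))) 1
        = ‖u‖⁻¹ * ((c * (u 0) ^ 2 + d * (u 1) ^ 2) * u 1) := rfl
    rw [GB2, if_neg hu, if_neg hne, ← hnorm]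
    simp only [PiLp.inner_apply, RCLike.inner_apply, conj_trivial, Fin.sum_univ_two, c0, c1]
    ring

lemma hH_of_h (a b c d : ℝ)
    (h : ∀ w : EuclideanSpace ℝ (Fin 2), ‖w‖ = 1 →
      (b + c - (a * (w 0) ^ 2 + b * (w 1) ^ 2 + c * (w 0) ^ 2 + d * (w 1) ^ 2) / 2) ^ 2
        ≤ 4 * a * d) :
    ∀ x y : ℝ, ((b+c)*(x^2+y^2) - ((a+c)*x^2+(b+d)*y^2)/2)^2 ≤ 4*a*d*(x^2+y^2)^2 := by
  intro x y
  by_cases hxy : x^2 + y^2 = 0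
  · have hx : x = 0 := by nlinarith [sq_nonneg x, sq_nonneg y]
    have hy : y = 0 := by nlinarith [sq_nonneg x, sq_nonneg y]
    subst hx; subst hy
    norm_num
  · have hS : 0 < x^2 + y^2 := lt_of_le_of_ne (by positivity) (Ne.symm hxy)
    set r := Real.sqrt (x^2 + y^2) with hrdef
    have hr : 0 < r := Real.sqrt_pos.2 hS
    have hr2 : r^2 = x^2 + y^2 := Real.sq_sqrt hS.le
    set w : EuclideanSpace ℝ (Fin 2) := (WithLp.equiv 2 (Fin 2 → ℝ)).symm ![x/r, y/r] with hwdef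
    have hw0 : w 0 = x/r := rfl
    have hw1 : w 1 = y/r := rfl
    have hwn : ‖w‖ = 1 := by
      rw [EuclideanSpace.norm_eq]
      simp only [Fin.sum_univ_two, hw0, hw1, Real.norm_eq_abs, sq_abs]
      rw [div_pow, div_pow, hr2, ← add_div, div_self hxy, Real.sqrt_one]
    have hineq := h w hwn
    rw [hw0, hw1] at hineq
    have e1 : (x/r)^2 = x^2/(x^2+y^2) := by rw [div_pow, hr2]
    have e2 : (y/r)^2 = y^2/(x^2+y^2) := by rw [div_pow, hr2]
    rw [e1, e2] at hineq
    have key2 : (b+c)*(x^2+y^2) - ((a+c)*x^2+(b+d)*y^2)/2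
        = (b + c - (a * (x^2/(x^2+y^2)) + b * (y^2/(x^2+y^2)) + c * (x^2/(x^2+y^2))
            + d * (y^2/(x^2+y^2))) / 2) * (x^2+y^2) := by
      field_simp
      ring
    rw [key2, mul_pow]
    have := mul_le_mul_of_nonneg_right hineq (by positivity : (0:ℝ) ≤ (x^2+y^2)^2)
    linarith

theorem GB2_monotone_of_unit_condition (a b c d : ℝ)
    (ha : 0 < a) (hb : 0 < b) (hc : 0 < c) (hd : 0 < d)
    (h : ∀ w : EuclideanSpace ℝ (Fin 2), ‖w‖ = 1 →
      (b + c - (a * (w 0) ^ 2 + b * (w 1) ^ 2 + c * (w 0) ^ 2 + d * (w 1) ^ 2) / 2) ^ 2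
        ≤ 4 * a * d) :
    ∀ u v : EuclideanSpace ℝ (Fin 2),
      0 ≤ @inner ℝ _ _ (GB2 a b c d u - GB2 a b c d v) (u - v) := by
  intro u v
  have hH := hH_of_h a b c d h
  have e0 : (u - v) 0 = u 0 - v 0 := rfl
  have e1 : (u - v) 1 = u 1 - v 1 := rfl
  have hinner : @inner ℝ _ _ (GB2 a b c d u - GB2 a b c d v) (u - v)
      = gaux a b c d (v 0) (v 1) (u 0 - v 0) (u 1 - v 1) 1
        - gaux a b c d (v 0) (v 1) (u 0 - v 0) (u 1 - v 1) 0 := by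
    rw [inner_sub_left, inner_GB2, inner_GB2, e0, e1]
    unfold gaux
    have c1 : v 0 + 1*(u 0 - v 0) = u 0 := by ring
    have c2 : v 1 + 1*(u 1 - v 1) = u 1 := by ring
    have c3 : v 0 + 0*(u 0 - v 0) = v 0 := by ring
    have c4 : v 1 + 0*(u 1 - v 1) = v 1 := by ring
    rw [c1, c2, c3, c4]
  rw [hinner]
  have := gaux_le a b c d ha hb hc hd hH (v 0) (v 1) (u 0 - v 0) (u 1 - v 1)
  linarith
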